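/- For ℓ = 1: there exists a distribution p ∈ Δ([n]) maximizing val(p) := min_{B ∈ [n]^(t)} Σ_{i ∉ B} v_i p_i that additionally satisfies v_1 p_1 ≥ v_2 p_2 ≥ ⋯ ≥ v_n p_n. -/

import Mathlib

open Finset

noncomputable def val (n t : ℕ) (v p : Fin n → ℝ) : ℝ :=
  sInf {x : ℝ | ∃ B : Finset (Fin n), B.card = t ∧ x = ∑ i ∈ univ \ B, v i * p i}

private lemma abel_nonpos (n : ℕ) (Y W : ℕ → ℝ)
    (hYa : ∀ i, Y (i + 1) ≤ Y i) (hY0 : ∀ i, 0 ≤ Y i)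
    (hW : ∀ k, k ≤ n → ∑ i ∈ Finset.range k, W i ≤ 0) :
    ∑ i ∈ Finset.range n, Y i * W i ≤ 0 := by
  have h := Finset.sum_range_by_parts Y W n
  simp only [smul_eq_mul] at h
  rw [h]
  have h1 : Y (n - 1) * ∑ i ∈ Finset.range n, W i ≤ 0 :=
    mul_nonpos_of_nonneg_of_nonpos (hY0 _) (hW n le_rfl)
  have h2 : 0 ≤ ∑ i ∈ Finset.range (n - 1), (Y (i + 1) - Y i) * ∑ j ∈ Finset.range (i + 1), W j := by
    apply Finset.sum_nonneg
    intro i hi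
    have hi' : i + 1 ≤ n := by have := Finset.mem_range.mp hi; omega
    have := hYa i
    have := hW (i + 1) hi'
    nlinarith
  linarith

private lemma card_filter_lt_fin (n k : ℕ) (hk : k ≤ n) :
    (Finset.univ.filter fun i : Fin n => (i : ℕ) < k).card = k := by
  classical
  rw [Finset.card_filter]
  have := Fin.sum_univ_eq_sum_range (fun j => if j < k then (1 : ℕ) else 0) n
  rw [this, ← Finset.card_filter]
  have : (Finset.range n).filter (fun j => j < k) = Finset.range k := by
    ext j
    simp only [Finset.mem_filter, Finset.mem_range]
    omega
  rw [this, Finset.card_range]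

/-- For `ℓ = 1`: there exists a distribution `p` maximizing `val` that in
addition satisfies `v 1 * p 1 ≥ v 2 * p 2 ≥ ⋯ ≥ v n * p n`. -/
theorem stmt_4 (n t : ℕ) (v : Fin n → ℝ)
    (hmono : ∀ i j : Fin n, i ≤ j → v j ≤ v i) (hpos : ∀ i, 0 < v i)
    (ht : t < n) :
    ∃ p : Fin n → ℝ, (∀ i, 0 ≤ p i) ∧ (∑ i, p i) = 1 ∧
      (∀ q : Fin n → ℝ, (∀ i, 0 ≤ q i) → (∑ i, q i) = 1 →
        val n t v q ≤ val n t v p) ∧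
      (∀ i j : Fin n, i ≤ j → v j * p j ≤ v i * p i) := by
  classical
  have hn : 0 < n := lt_of_le_of_lt (Nat.zero_le t) ht
  -- extended inverse values and their partial sums
  set u : ℕ → ℝ := fun j => if h : j < n then (v ⟨j, h⟩)⁻¹ else 0 with hu
  set S : ℕ → ℝ := fun m => ∑ i ∈ Finset.range m, u i with hSdef
  have hu0 : ∀ j, 0 ≤ u j := by
    intro j
    simp only [hu]
    split
    · exact inv_nonneg.mpr (hpos _).le
    · exact le_rfl
  have hS0 : ∀ m, 0 ≤ S m := fun m => Finset.sum_nonneg fun i _ => hu0 i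
  have hSpos : ∀ m, 0 < m → m ≤ n → 0 < S m := by
    intro m hm hmn
    apply Finset.sum_pos'
    · exact fun i _ => hu0 i
    · refine ⟨0, Finset.mem_range.mpr hm, ?_⟩
      simp only [hu, hn, dif_pos]
      exact inv_pos.mpr (hpos _)
  -- choose the optimal support size k
  obtain ⟨k, hkmem, hkmax⟩ := Finset.exists_max_image (Finset.Icc (t + 1) n)
    (fun m => ((m : ℝ) - t) / S m) ⟨t + 1, by simp [Finset.mem_Icc]; omega⟩
  rw [Finset.mem_Icc] at hkmem
  obtain ⟨hkt, hkn⟩ := hkmem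
  have hSk : 0 < S k := hSpos k (by omega) hkn
  set V : ℝ := ((k : ℝ) - t) / S k with hVdef
  have hV0 : 0 < V := by
    have h1 : t < k := hkt
    have h2 : (t : ℝ) < k := by exact_mod_cast h1
    exact div_pos (by linarith) hSk
  -- the key inequality on partial sums
  have hkey : ∀ m, m ≤ n → ((m - t : ℕ) : ℝ) ≤ V * S m := by
    intro m hmn
    by_cases hmt : m ≤ t
    · have : m - t = 0 := by omega
      rw [this]
      exact_mod_cast mul_nonneg hV0.le (hS0 m)
    · have hm1 : t + 1 ≤ m := by omega
      have hSm : 0 < S m := hSpos m (by omega) hmn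
      have := hkmax m (Finset.mem_Icc.mpr ⟨hm1, hmn⟩)
      rw [div_le_iff₀ hSm] at this
      calc ((m - t : ℕ) : ℝ) = (m : ℝ) - t := by
            rw [Nat.cast_sub (by omega)]
        _ ≤ V * S m := this
  -- the candidate distribution
  set p : Fin n → ℝ := fun i => if (i : ℕ) < k then (v i)⁻¹ / S k else 0 with hpdef
  have hp0 : ∀ i, 0 ≤ p i := by
    intro i
    simp only [hpdef]
    split
    · exact div_nonneg (inv_nonneg.mpr (hpos i).le) hSk.le
    · exact le_rfl
  -- each p i equals an indicator over S k
  have hpeq : ∀ i : Fin n, p i = (if (i : ℕ) < k then (v i)⁻¹ else 0) / S k := by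
    intro i
    simp only [hpdef]
    split <;> simp
  have hsum_ind : ∑ i : Fin n, (if (i : ℕ) < k then (v i)⁻¹ else 0) = S k := by
    have h1 : ∀ i : Fin n, (if (i : ℕ) < k then (v i)⁻¹ else 0)
        = (fun j : ℕ => if j < k then u j else 0) (i : ℕ) := by
      intro i
      simp only [hu, i.isLt, dif_pos]
    calc ∑ i : Fin n, (if (i : ℕ) < k then (v i)⁻¹ else 0)
        = ∑ i : Fin n, (fun j : ℕ => if j < k then u j else 0) (i : ℕ) :=
          Finset.sum_congr rfl fun i _ => h1 i
      _ = ∑ j ∈ Finset.range n, (if j < k then u j else 0) :=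
          Fin.sum_univ_eq_sum_range (fun j => if j < k then u j else 0) n
      _ = ∑ j ∈ (Finset.range n).filter (fun j => j < k), u j := by
          rw [Finset.sum_filter]
      _ = ∑ j ∈ Finset.range k, u j := by
          congr 1
          ext j
          simp only [Finset.mem_filter, Finset.mem_range]
          omega
      _ = S k := rfl
  have hpsum : ∑ i, p i = 1 := by
    rw [Finset.sum_congr rfl fun i _ => hpeq i, ← Finset.sum_div, hsum_ind,
      div_self hSk.ne']
  -- v i * p i is an indicator
  have hvp : ∀ i : Fin n, v i * p i = if (i : ℕ) < k then (S k)⁻¹ else 0 := by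
    intro i
    simp only [hpdef]
    split
    · rw [div_eq_mul_inv, ← mul_assoc, mul_inv_cancel₀ (hpos i).ne', one_mul]
    · ring
  have hvp0 : ∀ i : Fin n, 0 ≤ v i * p i := fun i => mul_nonneg (hpos i).le (hp0 i)
  refine ⟨p, hp0, hpsum, ?_, ?_⟩
  · -- maximality
    intro q hq0 hq1
    -- Step 1 : V ≤ val n t v p
    have hVp : V ≤ val n t v p := by
      apply le_csInf
      · obtain ⟨B, _, hB⟩ := Finset.exists_subset_card_eq (s := (Finset.univ : Finset (Fin n))) (n := t)
          (by simp; omega)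
        exact ⟨∑ i ∈ univ \ B, v i * p i, B, hB, rfl⟩
      · rintro x ⟨B, hBcard, rfl⟩
        set K : Finset (Fin n) := Finset.univ.filter (fun i : Fin n => (i : ℕ) < k) with hK
        have hKcard : K.card = k := card_filter_lt_fin n k hkn
        have hsub : K \ B ⊆ univ \ B := Finset.sdiff_subset_sdiff (Finset.subset_univ K) le_rfl
        have h1 : ∑ i ∈ K \ B, v i * p i ≤ ∑ i ∈ univ \ B, v i * p i :=
          Finset.sum_le_sum_of_subset_of_nonneg hsub fun i _ _ => hvp0 i
        have h2 : ∑ i ∈ K \ B, v i * p i = ((K \ B).card : ℝ) * (S k)⁻¹ := by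
          rw [Finset.sum_congr rfl (fun i hi => ?_), Finset.sum_const, nsmul_eq_mul]
          rw [hvp i, if_pos]
          exact (Finset.mem_filter.mp (Finset.mem_sdiff.mp hi).1).2
        have h3 : (k - t : ℕ) ≤ (K \ B).card := by
          have := Finset.le_card_sdiff B K
          omega
        have h4 : ((k - t : ℕ) : ℝ) * (S k)⁻¹ ≤ ((K \ B).card : ℝ) * (S k)⁻¹ := by
          apply mul_le_mul_of_nonneg_right _ (inv_nonneg.mpr hSk.le)
          exact_mod_cast h3
        have h5 : V = ((k - t : ℕ) : ℝ) * (S k)⁻¹ := by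
          rw [hVdef, div_eq_mul_inv, Nat.cast_sub (by omega)]
        linarith
    -- Step 2 : val n t v q ≤ V
    have hqV : val n t v q ≤ V := by
      set x : Fin n → ℝ := fun i => v i * q i with hxdef
      have hx0 : ∀ i, 0 ≤ x i := fun i => mul_nonneg (hpos i).le (hq0 i)
      -- sort x in decreasing order
      set σ : Equiv.Perm (Fin n) := Fin.revPerm.trans (Tuple.sort x) with hσdef
      set y : Fin n → ℝ := fun i => x (σ i) with hydef
      have hy0 : ∀ i, 0 ≤ y i := fun i => hx0 _
      have hyanti : Antitone y := by
        have h1 : Monotone (x ∘ Tuple.sort x) := Tuple.monotone_sort x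
        have h2 : Antitone (Fin.rev : Fin n → Fin n) := fun i j hij => Fin.rev_le_rev.mpr hij
        exact h1.comp_antitone h2
      -- the inverse values are monotone
      have humono : Monotone (fun i : Fin n => (v i)⁻¹) := by
        intro i j hij
        exact inv_anti₀ (hpos j) (hmono i j hij)
      -- budget for x, then for y via rearrangement
      have hxbud : ∑ i : Fin n, x i * (v i)⁻¹ = 1 := by
        rw [← hq1]
        apply Finset.sum_congr rfl
        intro i _
        show v i * q i * (v i)⁻¹ = q i
        rw [mul_comm (v i) (q i), mul_assoc, mul_inv_cancel₀ (hpos i).ne', mul_one]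
      have hybud : ∑ i : Fin n, y i * (v i)⁻¹ ≤ 1 := by
        have hav : Antivary y (fun i : Fin n => (v i)⁻¹) := hyanti.antivary humono
        have h1 := hav.sum_smul_le_sum_smul_comp_perm (σ := σ)
        simp only [smul_eq_mul] at h1
        have h2 : ∑ i : Fin n, y i * (v (σ i))⁻¹ = ∑ i : Fin n, x i * (v i)⁻¹ := by
          rw [← Equiv.sum_comp σ (fun i => x i * (v i)⁻¹)]
        rw [h2, hxbud] at h1
        exact h1
      -- the bad set B : image of the t largest coordinates
      set T : Finset (Fin n) := Finset.univ.filter (fun i : Fin n => (i : ℕ) < t) with hT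
      set B : Finset (Fin n) := T.image σ with hB
      have hBcard : B.card = t := by
        rw [hB, Finset.card_image_of_injective _ σ.injective, hT,
          card_filter_lt_fin n t (le_of_lt ht)]
      have hmem : ∑ i ∈ univ \ B, v i * q i ∈
          {z : ℝ | ∃ B : Finset (Fin n), B.card = t ∧ z = ∑ i ∈ univ \ B, v i * q i} :=
        ⟨B, hBcard, rfl⟩
      have hbdd : BddBelow {z : ℝ | ∃ B : Finset (Fin n), B.card = t ∧
          z = ∑ i ∈ univ \ B, v i * q i} := by
        refine ⟨0, ?_⟩
        rintro z ⟨C, _, rfl⟩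
        exact Finset.sum_nonneg fun i _ => mul_nonneg (hpos i).le (hq0 i)
      have hle1 : val n t v q ≤ ∑ i ∈ univ \ B, v i * q i := csInf_le hbdd hmem
      -- rewrite the complement sum via σ
      have hcompl : ∑ i ∈ univ \ B, v i * q i = ∑ i ∈ univ \ T, y i := by
        have h1 : (univ \ B : Finset (Fin n)) = (univ \ T).image σ := by
          rw [hB, Finset.image_sdiff univ T σ.injective, Finset.image_univ_equiv σ]
        rw [h1, Finset.sum_image (fun a _ b _ h => σ.injective h)]
      -- the main estimate : ∑_{i ∉ T} y i ≤ V
      have hmain : ∑ i ∈ univ \ T, y i ≤ V := by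
        -- convert to a range sum
        set Y : ℕ → ℝ := fun j => if h : j < n then y ⟨j, h⟩ else 0 with hY
        set W : ℕ → ℝ := fun j => (if t ≤ j then (1 : ℝ) else 0) - V * u j with hWdef
        have hYa : ∀ i, Y (i + 1) ≤ Y i := by
          intro i
          simp only [hY]
          split
          · split
            · exact hyanti (by simp [Fin.le_def])
            · omega
          · split
            · exact hy0 _
            · exact le_rfl
        have hY0 : ∀ i, 0 ≤ Y i := by
          intro i
          simp only [hY]
          split
          · exact hy0 _
          · exact le_rfl
        have hWsum : ∀ m, m ≤ n → ∑ i ∈ Finset.range m, W i ≤ 0 := by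
          intro m hmn
          have h1 : ∑ i ∈ Finset.range m, W i = ((m - t : ℕ) : ℝ) - V * S m := by
            simp only [hWdef, Finset.sum_sub_distrib, ← Finset.mul_sum]
            congr 1
            rw [Finset.sum_boole]
            congr 1
            have : (Finset.range m).filter (fun i => t ≤ i) = Finset.Ico t m := by
              ext j
              simp only [Finset.mem_filter, Finset.mem_range, Finset.mem_Ico]
              omega
            rw [this, Nat.card_Ico]
          rw [h1, sub_nonpos]
          exact hkey m hmn
        have habel := abel_nonpos n Y W hYa hY0 hWsum
        -- unfold the abel estimate
        have hsplit : ∑ i ∈ Finset.range n, Y i * W i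
            = (∑ i ∈ Finset.range n, Y i * (if t ≤ i then (1:ℝ) else 0))
              - V * ∑ i ∈ Finset.range n, Y i * u i := by
          simp only [hWdef, mul_sub]
          rw [Finset.sum_sub_distrib, Finset.mul_sum]
          congr 1
          apply Finset.sum_congr rfl
          intro i _
          ring
        have hYu : ∑ i ∈ Finset.range n, Y i * u i = ∑ i : Fin n, y i * (v i)⁻¹ := by
          rw [← Fin.sum_univ_eq_sum_range (fun j => Y j * u j) n]
          apply Finset.sum_congr rfl
          intro i _
          simp only [hY, hu, i.isLt, dif_pos]
        have hYT : ∑ i ∈ Finset.range n, Y i * (if t ≤ i then (1:ℝ) else 0)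
            = ∑ i ∈ univ \ T, y i := by
          rw [← Fin.sum_univ_eq_sum_range (fun j => Y j * (if t ≤ j then (1:ℝ) else 0)) n]
          have h2 : (univ \ T : Finset (Fin n)) = univ.filter (fun i : Fin n => t ≤ (i : ℕ)) := by
            ext i
            simp only [hT, Finset.mem_sdiff, Finset.mem_filter, Finset.mem_univ, true_and,
              Finset.mem_sdiff]
            omega
          rw [h2, Finset.sum_filter]
          apply Finset.sum_congr rfl
          intro i _
          simp only [hY, i.isLt, dif_pos]
          split <;> simp
        rw [hsplit, hYT, hYu, sub_nonpos] at habel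
        calc ∑ i ∈ univ \ T, y i ≤ V * ∑ i : Fin n, y i * (v i)⁻¹ := habel
          _ ≤ V * 1 := mul_le_mul_of_nonneg_left hybud hV0.le
          _ = V := mul_one V
      calc val n t v q ≤ ∑ i ∈ univ \ B, v i * q i := hle1
        _ = ∑ i ∈ univ \ T, y i := hcompl
        _ ≤ V := hmain
    linarith
  · -- monotonicity of v i * p i
    intro i j hij
    rw [hvp i, hvp j]
    by_cases hj : (j : ℕ) < k
    · have hi : (i : ℕ) < k := lt_of_le_of_lt hij hj
      rw [if_pos hi, if_pos hj]
    · rw [if_neg hj]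
      split
      · exact inv_nonneg.mpr hSk.le
      · exact le_rfl
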